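/- Let M = 2^{n_M} for a positive integer n_M. For every nonzero ν ∈ ℤ³ set a(ν) = (16/(M·4^{μ(ν)})) · ⌈M·4^{μ(ν)}/(16‖ν‖²)⌉. Then Σ_{μ=2}^{n_p+1} Σ_{ν ∈ B_μ} |a(ν) − 1/‖ν‖²| ≤ (4/M) · (7·2^{n_p+1} − 9 n_p − 11 − 3·2^{−n_p}). -/

import Mathlib

/-- The box `{ν ∈ ℤ³ : max(|ν₁|,|ν₂|,|ν₃|) ≤ c}` as a finset. -/
noncomputable def boxFin (c : ℤ) : Finset (Fin 3 → ℤ) :=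
  Fintype.piFinset fun _ => Finset.Icc (-c) c

/-- `B_μ`: the box of radius `2^{μ−1} − 1` minus the box of radius `2^{μ−2} − 1`. -/
noncomputable def BFin (μ : ℕ) : Finset (Fin 3 → ℤ) :=
  boxFin (2 ^ (μ - 1) - 1) \ boxFin (2 ^ (μ - 2) - 1)

/-- `μ(ν) = ⌊log₂ max(|ν₁|,|ν₂|,|ν₃|)⌋ + 2` for nonzero `ν ∈ ℤ³`. -/
def muIdx (ν : Fin 3 → ℤ) : ℕ :=
  Nat.log 2 (max (ν 0).natAbs (max (ν 1).natAbs (ν 2).natAbs)) + 2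

/-- The squared Euclidean norm `‖ν‖²` of an integer 3-vector, as a real number. -/
def normSq3 (ν : Fin 3 → ℤ) : ℝ := ∑ i, ((ν i : ℝ)) ^ 2

/-- The approximate coefficient
`a(ν) = (16/(M·4^{μ(ν)})) · ⌈M·4^{μ(ν)}/(16‖ν‖²)⌉`. -/
noncomputable def aCoeff (M : ℝ) (ν : Fin 3 → ℤ) : ℝ :=
  (16 / (M * 4 ^ muIdx ν)) * (⌈M * 4 ^ muIdx ν / (16 * normSq3 ν)⌉ : ℤ)

lemma mem_boxFin {c : ℤ} {ν : Fin 3 → ℤ} : ν ∈ boxFin c ↔ ∀ i, |ν i| ≤ c := by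
  simp [boxFin, Fintype.mem_piFinset, abs_le, and_comm]

lemma natAbs_bounds {μ : ℕ} {ν : Fin 3 → ℤ} (hν : ν ∈ BFin μ) :
    (∀ i, (ν i).natAbs < 2 ^ (μ - 1)) ∧ (∃ i, 2 ^ (μ - 2) ≤ (ν i).natAbs) := by
  obtain ⟨h1, h2⟩ := Finset.mem_sdiff.mp hν
  rw [mem_boxFin] at h1
  rw [mem_boxFin] at h2; push_neg at h2
  obtain ⟨i, hi⟩ := h2
  refine ⟨fun j => ?_, ⟨i, ?_⟩⟩
  · have h := h1 j
    zify; omega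
  · zify; omega

lemma muIdx_of_mem {μ : ℕ} (hμ : 2 ≤ μ) {ν : Fin 3 → ℤ} (hν : ν ∈ BFin μ) :
    muIdx ν = μ := by
  obtain ⟨hub, i, hlb⟩ := natAbs_bounds hν
  set m := max (ν 0).natAbs (max (ν 1).natAbs (ν 2).natAbs) with hm
  have hub' : m < 2 ^ (μ - 1) := by
    apply Nat.max_lt.mpr ⟨hub 0, Nat.max_lt.mpr ⟨hub 1, hub 2⟩⟩
  have hlb' : 2 ^ (μ - 2) ≤ m := by
    refine hlb.trans ?_
    fin_cases i
    · exact le_max_left _ _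
    · exact le_max_of_le_right (le_max_left _ _)
    · exact le_max_of_le_right (le_max_right _ _)
  have hlog : Nat.log 2 m = μ - 2 := by
    apply Nat.log_eq_of_pow_le_of_lt_pow hlb'
    have h : μ - 2 + 1 = μ - 1 := by omega
    rw [h]; exact hub'
  unfold muIdx; rw [← hm, hlog]; omega

lemma normSq3_pos {μ : ℕ} {ν : Fin 3 → ℤ} (hν : ν ∈ BFin μ) :
    0 < normSq3 ν := by
  obtain ⟨_, i, hlb⟩ := natAbs_bounds hν
  have hne : ν i ≠ 0 := by
    intro h
    have hpp := pow_pos (by norm_num : (0:ℕ) < 2) (μ - 2)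
    rw [h] at hlb
    simp only [Int.natAbs_zero] at hlb
    omega
  have h1 : (0:ℝ) < (ν i : ℝ) ^ 2 := by positivity
  unfold normSq3
  calc (0:ℝ) < (ν i : ℝ)^2 := h1
    _ ≤ ∑ j, ((ν j : ℝ))^2 := Finset.single_le_sum (f := fun j => ((ν j : ℝ))^2)
        (fun j _ => by positivity) (Finset.mem_univ i)

lemma pointwise_bound {M : ℝ} (hM : 0 < M) {ν : Fin 3 → ℤ} (hN : 0 < normSq3 ν) :
    |aCoeff M ν - 1 / normSq3 ν| ≤ 16 / (M * 4 ^ muIdx ν) := by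
  set P := M * 4 ^ muIdx ν with hPdef
  have hP : 0 < P := by positivity
  set x := P / (16 * normSq3 ν) with hx
  have h1 : (1 : ℝ) / normSq3 ν = (16 / P) * x := by
    field_simp [hx]
    rw [hx]; field_simp
  rw [aCoeff, ← hPdef, ← hx, h1, ← mul_sub, abs_mul,
    abs_of_pos (by positivity : (0:ℝ) < 16 / P)]
  have h2 : |(⌈x⌉ : ℝ) - x| ≤ 1 := by
    rw [abs_of_nonneg (by linarith [Int.le_ceil x])]
    linarith [Int.ceil_lt_add_one x]
  calc 16 / P * |(⌈x⌉ : ℝ) - x| ≤ 16 / P * 1 := by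
        apply mul_le_mul_of_nonneg_left h2 (by positivity)
    _ = 16 / P := mul_one _

lemma boxFin_card (k : ℕ) : (boxFin ((2:ℤ) ^ k - 1)).card = (2 ^ (k+1) - 1 : ℕ) ^ 3 := by
  rw [boxFin, Fintype.card_piFinset]
  have h : (Finset.Icc (-(2 ^ k - 1) : ℤ) (2 ^ k - 1)).card = (2 ^ (k+1) - 1 : ℕ) := by
    rw [Int.card_Icc]
    have hK : ((2 ^ (k+1) : ℕ) : ℤ) = (2:ℤ) ^ (k+1) := by push_cast; norm_num
    have h2 : (2:ℤ) ^ (k+1) = 2 * 2 ^ k := by ring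
    have h3 : (1:ℤ) ≤ 2 ^ k := one_le_pow₀ (by norm_num)
    omega
  simp only [h, Finset.prod_const, Finset.card_univ, Fintype.card_fin]

lemma BFin_card {μ : ℕ} (hμ : 2 ≤ μ) :
    (BFin μ).card = (2 ^ μ - 1 : ℕ) ^ 3 - (2 ^ (μ-1) - 1 : ℕ) ^ 3 := by
  have e1 : μ - 1 + 1 = μ := by omega
  have e2 : μ - 2 + 1 = μ - 1 := by omega
  rw [BFin, Finset.card_sdiff_of_subset]
  · rw [boxFin_card (μ-1), boxFin_card (μ-2), e1, e2]
  · intro ν hν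
    simp only [boxFin, Fintype.mem_piFinset] at *
    intro i
    have h := hν i
    rw [Finset.mem_Icc] at *
    have : (2:ℤ) ^ (μ-2) ≤ 2 ^ (μ-1) := pow_le_pow_right₀ (by norm_num) (by omega)
    omega

lemma sum_id (n : ℕ) (hn : 1 ≤ n) :
    ∑ μ ∈ Finset.Icc 2 (n+1), (((2:ℝ)^μ - 1)^3 - ((2:ℝ)^(μ-1) - 1)^3) * (16 / 4^μ)
      = 4 * (7 * 2^(n+1) - 9*(n:ℝ) - 11 - 3/2^n) := by
  induction n, hn using Nat.le_induction with
  | base => norm_num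
  | succ n hn ih =>
    rw [show n + 1 + 1 = (n + 1) + 1 from rfl,
      Finset.sum_Icc_succ_top (by omega : 2 ≤ n + 1 + 1), ih]
    have e : n + 1 + 1 - 1 = n + 1 := by omega
    rw [e]
    have h2 : (2:ℝ) ^ n ≠ 0 := by positivity
    have h4 : (4:ℝ) ^ n = (2^n)^2 := by
      rw [show (4:ℝ) = 2^2 by norm_num, ← pow_mul, ← pow_mul, mul_comm]
    push_cast
    simp only [pow_succ, h4]
    field_simp
    ring

/-- Bound on the total coefficient error of the momentum-state preparation:
`Σ_{μ=2}^{n_p+1} Σ_{ν ∈ B_μ} |a(ν) − 1/‖ν‖²|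
  ≤ (4/M)·(7·2^{n_p+1} − 9 n_p − 11 − 3·2^{−n_p})` with `M = 2^{n_M}`. -/
theorem stmt_2 (n_p n_M : ℕ) (hp : 0 < n_p) (hM : 0 < n_M) :
    ∑ μ ∈ Finset.Icc 2 (n_p + 1), ∑ ν ∈ BFin μ,
        |aCoeff ((2 : ℝ) ^ n_M) ν - 1 / normSq3 ν|
      ≤ (4 / (2 : ℝ) ^ n_M) *
          (7 * 2 ^ (n_p + 1) - 9 * (n_p : ℝ) - 11 - 3 / 2 ^ n_p) := by
  set M : ℝ := (2:ℝ) ^ n_M with hMdef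
  have hMpos : 0 < M := by positivity
  have key : ∀ μ ∈ Finset.Icc 2 (n_p + 1),
      ∑ ν ∈ BFin μ, |aCoeff M ν - 1 / normSq3 ν|
        ≤ (((2:ℝ)^μ - 1)^3 - ((2:ℝ)^(μ-1) - 1)^3) * (16 / 4^μ) / M := by
    intro μ hμ
    rw [Finset.mem_Icc] at hμ
    have h2μ : 2 ≤ μ := hμ.1
    have hcard : ((BFin μ).card : ℝ) = ((2:ℝ)^μ - 1)^3 - ((2:ℝ)^(μ-1) - 1)^3 := by
      rw [BFin_card h2μ]
      have hle : (2:ℕ) ^ (μ-1) - 1 ≤ 2 ^ μ - 1 :=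
        Nat.sub_le_sub_right (Nat.pow_le_pow_right (by norm_num) (by omega)) 1
      have hmono : ((2:ℕ) ^ (μ-1) - 1) ^ 3 ≤ ((2:ℕ) ^ μ - 1) ^ 3 :=
        Nat.pow_le_pow_left hle 3
      have o1 : (1:ℕ) ≤ 2 ^ μ := Nat.one_le_two_pow
      have o2 : (1:ℕ) ≤ 2 ^ (μ-1) := Nat.one_le_two_pow
      rw [Nat.cast_sub hmono]
      push_cast [Nat.cast_sub o1, Nat.cast_sub o2]
      ring
    have h4pos : (0:ℝ) < 4 ^ μ := by positivity
    calc ∑ ν ∈ BFin μ, |aCoeff M ν - 1 / normSq3 ν|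
        ≤ ∑ _ν ∈ BFin μ, 16 / (M * 4 ^ μ) := by
          refine Finset.sum_le_sum (fun ν hν => ?_)
          have h := pointwise_bound hMpos (normSq3_pos hν)
          rwa [muIdx_of_mem h2μ hν] at h
      _ = ((BFin μ).card : ℝ) * (16 / (M * 4 ^ μ)) := by
          rw [Finset.sum_const, nsmul_eq_mul]
      _ = (((2:ℝ)^μ - 1)^3 - ((2:ℝ)^(μ-1) - 1)^3) * (16 / 4^μ) / M := by
          rw [hcard]; ring
  calc ∑ μ ∈ Finset.Icc 2 (n_p + 1), ∑ ν ∈ BFin μ, |aCoeff M ν - 1 / normSq3 ν|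
      ≤ ∑ μ ∈ Finset.Icc 2 (n_p + 1),
          (((2:ℝ)^μ - 1)^3 - ((2:ℝ)^(μ-1) - 1)^3) * (16 / 4^μ) / M :=
        Finset.sum_le_sum key
    _ = (∑ μ ∈ Finset.Icc 2 (n_p + 1),
          (((2:ℝ)^μ - 1)^3 - ((2:ℝ)^(μ-1) - 1)^3) * (16 / 4^μ)) / M := by
        rw [← Finset.sum_div]
    _ = 4 * (7 * 2^(n_p+1) - 9*(n_p:ℝ) - 11 - 3/2^n_p) / M := by
        rw [sum_id n_p hp]
    _ = (4 / M) * (7 * 2 ^ (n_p + 1) - 9 * (n_p : ℝ) - 11 - 3 / 2 ^ n_p) := by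
        ring
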